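/- If a lens satisfies both the SourceStability law (∀ s ∈ S, ∃ v ∈ V, Put(s, v) = s) and the Undoability law (∀ s ∈ S, ∀ v ∈ V, Put(Put(s, v), Get(s)) = s), then it satisfies the GetPut law (∀ s ∈ S, Put(s, Get(s)) = s). -/
import Mathlib

/-- SourceStability and Undoability imply GetPut. -/
theorem sourceStability_undoability_implies_getPut {S V : Type*} (Get : S → V) (Put : S → V → S)
    (hSS : ∀ s : S, ∃ v : V, Put s v = s)
    (hUD : ∀ s : S, ∀ v : V, Put (Put s v) (Get s) = s) :
    ∀ s : S, Put s (Get s) = s := by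
  intro s
  obtain ⟨v, hv⟩ := hSS s
  have := hUD s v
  rwa [hv] at this
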